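/- Let κ > 0 and p, q, γ ∈ ℝ. Then 𝒫(∂)[(1−·)^γ](z) = 0 for all z in the open unit disk 𝔻 if and only if A(p,q,γ) = 0 and C(p,γ) = 0, which holds if and only if p = (2 + κ/2)γ − (κ/2)γ² and 2p − q = (1 + κ/2)γ (i.e. (p,q) lies on the parabola ℛ with parameter γ). -/

import Mathlib

/-- The one-variable Beliaev–Smirnov type operator `𝒫(∂)` with parameters `κ, p, q`:
`𝒫(∂)[G](z) = −(κ/2)(z G′(z) + z² G″(z)) − ((1+z)/(1−z)) z G′(z)
  + (−p/(1−z)² + q/(1−z) + p − q) G(z)`. -/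
noncomputable def Pd (κ p q : ℝ) (G : ℂ → ℂ) (z : ℂ) : ℂ :=
  -(κ / 2 : ℂ) * (z * deriv G z + z ^ 2 * deriv (deriv G) z)
    - ((1 + z) / (1 - z)) * (z * deriv G z)
    + (-(p : ℂ) / (1 - z) ^ 2 + (q : ℂ) / (1 - z) + (p : ℂ) - (q : ℂ)) * G z

lemma hd_pow (c : ℂ) (z : ℂ) (hz : z ∈ Metric.ball (0:ℂ) 1) :
    HasDerivAt (fun w : ℂ => (1 - w) ^ c) (-(c * (1 - z) ^ (c - 1))) z := by
  have hre : 0 < ((1:ℂ) - z).re := by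
    simp only [Complex.sub_re, Complex.one_re]
    have h1 : z.re ≤ ‖z‖ := Complex.re_le_norm z
    have h2 : ‖z‖ < 1 := by simpa [Complex.dist_eq] using hz
    linarith
  have h : HasDerivAt (fun w : ℂ => 1 - w) (-1) z := by
    simpa using (hasDerivAt_id z).const_sub 1
  have := h.cpow_const (c := c) (Or.inl hre)
  simpa [mul_comm] using this

lemma Pd_key (κ p q γ : ℝ) (z : ℂ) (hz : z ∈ Metric.ball (0:ℂ) 1) :
    Pd κ p q (fun w => (1 - w) ^ (γ : ℂ)) z
      = (1 - z) ^ ((γ:ℂ) - 2) *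
        (((p:ℂ) - q + γ - κ/2 * γ^2) * (1 - z)^2
          + ((κ:ℂ) * γ^2 - κ/2 * γ - 3 * γ + q) * (1 - z)
          + (-(p:ℂ) + (2 + κ/2) * γ - κ/2 * γ^2)) := by
  have h1z : (1:ℂ) - z ≠ 0 := by
    intro h
    have : z = 1 := by linear_combination -h
    rw [this] at hz
    simp at hz
  have e1 : deriv (fun w : ℂ => (1 - w) ^ (γ:ℂ)) z
      = -((γ:ℂ) * (1 - z) ^ ((γ:ℂ) - 1)) := (hd_pow _ z hz).deriv
  have e2 : deriv (deriv (fun w : ℂ => (1 - w) ^ (γ:ℂ))) z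
      = (γ:ℂ) * (((γ:ℂ) - 1) * (1 - z) ^ ((γ:ℂ) - 2)) := by
    have heq : deriv (fun w : ℂ => (1 - w) ^ (γ:ℂ))
        =ᶠ[nhds z] fun w => -((γ:ℂ) * (1 - w) ^ ((γ:ℂ) - 1)) := by
      filter_upwards [Metric.isOpen_ball.mem_nhds hz] with w hw
        using (hd_pow _ w hw).deriv
    rw [heq.deriv_eq]
    have hD : HasDerivAt (fun w : ℂ => -((γ:ℂ) * (1 - w) ^ ((γ:ℂ) - 1)))
        ((γ:ℂ) * (((γ:ℂ) - 1) * (1 - z) ^ ((γ:ℂ) - 2))) z := by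
      have := ((hd_pow ((γ:ℂ) - 1) z hz).const_mul (γ:ℂ)).neg
      have h12 : (γ:ℂ) - 1 - 1 = (γ:ℂ) - 2 := by ring
      simpa [h12, Pi.neg_def] using this
    exact hD.deriv
  have w2 : (1 - z) ^ (γ:ℂ) = (1 - z) ^ ((γ:ℂ) - 2) * (1 - z) ^ 2 := by
    rw [← Complex.cpow_natCast (1 - z) 2, ← Complex.cpow_add _ _ h1z]
    norm_num
  have w1 : (1 - z) ^ ((γ:ℂ) - 1) = (1 - z) ^ ((γ:ℂ) - 2) * (1 - z) := by
    have h := Complex.cpow_add ((γ:ℂ) - 2) 1 h1z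
    rw [Complex.cpow_one] at h
    rw [show (γ:ℂ) - 1 = (γ:ℂ) - 2 + 1 by ring, h]
  unfold Pd
  rw [e1, e2]
  simp only [w1, w2]
  field_simp
  ring

/-- `𝒫(∂)[(1−·)^γ] = 0` on the unit disk iff `A(p,q,γ) = 0` and `C(p,γ) = 0`, which
holds iff `p = (2+κ/2)γ − (κ/2)γ²` and `2p − q = (1+κ/2)γ`, i.e. `(p,q)` lies on the
parabola `ℛ` with parameter `γ`. -/
theorem Pd_power_solution_iff_on_parabola (κ p q γ : ℝ) (hκ : 0 < κ) :
    ((∀ z ∈ Metric.ball (0:ℂ) 1, Pd κ p q (fun w => (1 - w) ^ (γ : ℂ)) z = 0)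
      ↔ (p - q + γ - (κ / 2) * γ ^ 2 = 0 ∧ -p + (2 + κ / 2) * γ - (κ / 2) * γ ^ 2 = 0))
    ∧ ((p - q + γ - (κ / 2) * γ ^ 2 = 0 ∧ -p + (2 + κ / 2) * γ - (κ / 2) * γ ^ 2 = 0)
      ↔ (p = (2 + κ / 2) * γ - (κ / 2) * γ ^ 2 ∧ 2 * p - q = (1 + κ / 2) * γ)) := by
  constructor
  · constructor
    · intro h
      have hm0 : (0:ℂ) ∈ Metric.ball (0:ℂ) 1 := by simp
      have hm1 : (1/2 : ℂ) ∈ Metric.ball (0:ℂ) 1 := by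
        simp only [Metric.mem_ball, Complex.dist_eq, sub_zero]
        rw [show ((1:ℂ)/2) = ((1/2 : ℝ) : ℂ) by norm_num, Complex.norm_real, Real.norm_eq_abs,
          abs_of_pos (by norm_num : (0:ℝ) < 1/2)]
        norm_num
      have hm2 : (-(1/2) : ℂ) ∈ Metric.ball (0:ℂ) 1 := by
        simp only [Metric.mem_ball, Complex.dist_eq, sub_zero]
        rw [norm_neg, show ((1:ℂ)/2) = ((1/2 : ℝ) : ℂ) by norm_num,
          Complex.norm_real, Real.norm_eq_abs, abs_of_pos (by norm_num : (0:ℝ) < 1/2)]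
        norm_num
      have f0 := (Pd_key κ p q γ 0 hm0).symm.trans (h 0 hm0)
      have f1 := (Pd_key κ p q γ (1/2) hm1).symm.trans (h (1/2) hm1)
      have f2 := (Pd_key κ p q γ (-(1/2)) hm2).symm.trans (h (-(1/2)) hm2)
      have n1 : ((1:ℂ) - 1/2) ^ ((γ:ℂ) - 2) ≠ 0 := by
        intro hcon
        rw [Complex.cpow_eq_zero_iff] at hcon
        norm_num at hcon
      have n2 : ((1:ℂ) - -(1/2)) ^ ((γ:ℂ) - 2) ≠ 0 := by
        intro hcon
        rw [Complex.cpow_eq_zero_iff] at hcon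
        norm_num at hcon
      have g0 : ((p:ℂ) - q + γ - κ/2 * γ^2) + ((κ:ℂ) * γ^2 - κ/2 * γ - 3 * γ + q)
          + (-(p:ℂ) + (2 + κ/2) * γ - κ/2 * γ^2) = 0 := by
        simpa using f0
      have g1 := (mul_eq_zero.mp f1).resolve_left n1
      have g2 := (mul_eq_zero.mp f2).resolve_left n2
      have hA : ((p:ℂ) - q + γ - κ/2 * γ^2) = 0 := by
        linear_combination (-4:ℂ) * g0 + 2 * g1 + 2 * g2
      have hC : (-(p:ℂ) + (2 + κ/2) * γ - κ/2 * γ^2) = 0 := by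
        linear_combination (-3:ℂ) * g0 + 3 * g1 + g2
      constructor
      · exact_mod_cast hA
      · exact_mod_cast hC
    · rintro ⟨hA, hC⟩ z hz
      rw [Pd_key κ p q γ z hz]
      have hA' : ((p:ℂ) - q + γ - κ/2 * γ^2) = 0 := by exact_mod_cast hA
      have hC' : (-(p:ℂ) + (2 + κ/2) * γ - κ/2 * γ^2) = 0 := by exact_mod_cast hC
      have hB' : ((κ:ℂ) * γ^2 - κ/2 * γ - 3 * γ + q) = 0 := by
        linear_combination -hA' - hC'
      linear_combination (1 - z) ^ ((γ:ℂ) - 2) * (1 - z)^2 * hA'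
        + (1 - z) ^ ((γ:ℂ) - 2) * (1 - z) * hB'
        + (1 - z) ^ ((γ:ℂ) - 2) * hC'
  · constructor
    · rintro ⟨h1, h2⟩
      exact ⟨by linear_combination -h2, by linear_combination h1 - h2⟩
    · rintro ⟨h1, h2⟩
      exact ⟨by linear_combination h2 - h1, by linear_combination -h1⟩
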